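/- The number of antitone order-decreasing partial transformations of [n] with |dom ρ| = r and |im ρ| = p equals C(r−1, p−1)·C(n+1, r+p). -/

import Mathlib

/-- A partial transformation of the chain `[n]` (elements of `Fin n`). -/
def PT (n : ℕ) := Fin n → Option (Fin n)

/-- Right-to-left composition: `x (ρσ) = (x ρ) σ`. -/
def comp {n : ℕ} (ρ σ : PT n) : PT n := fun x => (ρ x).bind σ

/-- The identity partial transformation. -/
def idPT (n : ℕ) : PT n := fun x => some x

/-- Isotone (order-preserving) on its domain. -/
def IsIsotone {n : ℕ} (ρ : PT n) : Prop :=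
  ∀ x x' y y' : Fin n, ρ x = some y → ρ x' = some y' → x ≤ x' → y ≤ y'

/-- Antitone (order-reversing) on its domain. -/
def IsAntitone {n : ℕ} (ρ : PT n) : Prop :=
  ∀ x x' y y' : Fin n, ρ x = some y → ρ x' = some y' → x ≤ x' → y' ≤ y

/-- Order-decreasing on its domain. -/
def IsDecreasing {n : ℕ} (ρ : PT n) : Prop :=
  ∀ x y : Fin n, ρ x = some y → y ≤ x

/-- Member of the monoid `DORPₙ`: monotone and order-decreasing. -/
def IsDORP {n : ℕ} (ρ : PT n) : Prop :=
  IsDecreasing ρ ∧ (IsIsotone ρ ∨ IsAntitone ρ)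

/-- The image of a partial transformation. -/
def im {n : ℕ} (ρ : PT n) : Set (Fin n) := {y | ∃ x, ρ x = some y}

/-- The domain of a partial transformation. -/
def domSet {n : ℕ} (ρ : PT n) : Set (Fin n) := {x | ρ x ≠ none}

/-- The height of a partial transformation: the size of its image. -/
noncomputable def height {n : ℕ} (ρ : PT n) : ℕ := (im ρ).ncard

/-- Equality of kernels: same domain and the same partition into fibers. -/
def kerEq {n : ℕ} (ρ σ : PT n) : Prop :=
  (∀ x, ρ x = none ↔ σ x = none) ∧ (∀ x y, ρ x = ρ y ↔ σ x = σ y)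



namespace S3
open Finset Function

lemma sm_le {m : ℕ} {f : Fin m → ℕ} (hf : StrictMono f) :
    ∀ v (h : v < m), v ≤ f ⟨v, h⟩ := by
  intro v
  induction v with
  | zero => intro h; exact Nat.zero_le _
  | succ v ih =>
    intro h
    have hv : v < m := by omega
    have h1 := hf (show (⟨v, hv⟩ : Fin m) < ⟨v + 1, h⟩ by simp [Fin.lt_def])
    have h2 := ih hv
    omega

variable {r p : ℕ}

/-- number of elements of `c` with value `< i` -/
def F (c : Finset (Fin (r - 1))) (i : ℕ) : ℕ :=
  (c.filter (fun e : Fin (r - 1) => (e : ℕ) < i)).card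

lemma F_mono (c : Finset (Fin (r - 1))) {i i' : ℕ} (h : i ≤ i') : F c i ≤ F c i' := by
  apply Finset.card_le_card
  apply Finset.monotone_filter_right
  intro e he; omega

lemma F_zero (c : Finset (Fin (r - 1))) : F c 0 = 0 := by
  simp [F]

lemma F_le_card (c : Finset (Fin (r - 1))) (i : ℕ) : F c i ≤ c.card :=
  Finset.card_le_card (Finset.filter_subset _ _)

lemma F_succ (c : Finset (Fin (r - 1))) (v : ℕ) :
    F c (v + 1) = F c v + (c.filter (fun e : Fin (r - 1) => (e : ℕ) = v)).card := by
  classical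
  have hpred : c.filter (fun e : Fin (r - 1) => (e : ℕ) < v + 1) =
      c.filter (fun e : Fin (r - 1) => (e : ℕ) < v ∨ (e : ℕ) = v) := by
    apply Finset.filter_congr; intro e _; constructor <;> (intro h; omega)
  rw [F, hpred, Finset.filter_or, Finset.card_union_of_disjoint, F]
  rw [Finset.disjoint_filter]
  intro x _ hx; omega

lemma F_succ_of_mem (c : Finset (Fin (r - 1))) {v : ℕ} (h : v < r - 1) :
    F c (v + 1) = F c v + (if (⟨v, h⟩ : Fin (r - 1)) ∈ c then 1 else 0) := by
  classical
  rw [F_succ]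
  congr 1
  have heq : c.filter (fun e : Fin (r - 1) => (e : ℕ) = v) =
      c.filter (fun e : Fin (r - 1) => e = (⟨v, h⟩ : Fin (r - 1))) := by
    apply Finset.filter_congr; intro e _; simp [Fin.ext_iff]
  rw [heq, Finset.filter_eq']
  split <;> simp

lemma F_succ_le (c : Finset (Fin (r - 1))) (v : ℕ) : F c (v + 1) ≤ F c v + 1 := by
  classical
  rw [F_succ]
  have h1 : (c.filter (fun e : Fin (r - 1) => (e : ℕ) = v)).card ≤ 1 := by
    apply Finset.card_le_one.2
    intro a ha b hb
    simp only [Finset.mem_filter] at ha hb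
    exact Fin.ext (ha.2.trans hb.2.symm)
  omega

lemma F_top (c : Finset (Fin (r - 1))) : F c (r - 1) = c.card := by
  rw [F, Finset.filter_true_of_mem]
  intro e _; exact e.2

lemma F_surj (c : Finset (Fin (r - 1))) (hr : 1 ≤ r) {j : ℕ} (hj : j ≤ c.card) :
    ∃ i < r, F c i = j := by
  rcases Nat.eq_zero_or_pos j with rfl | hj0
  · exact ⟨0, hr, F_zero c⟩
  · have hP : j ≤ F c (r - 1) := by rw [F_top]; exact hj
    have hex : ∃ m, j ≤ F c m := ⟨r - 1, hP⟩
    classical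
    have hm : j ≤ F c (Nat.find hex) := Nat.find_spec hex
    have hmle : Nat.find hex ≤ r - 1 := Nat.find_min' hex hP
    have hm0 : Nat.find hex ≠ 0 := by
      intro h0
      rw [h0, F_zero] at hm; omega
    have hprev : ¬ j ≤ F c (Nat.find hex - 1) := Nat.find_min hex (by omega)
    have hstep := F_succ_le c (Nat.find hex - 1)
    have heq : Nat.find hex - 1 + 1 = Nat.find hex := by omega
    rw [heq] at hstep
    exact ⟨Nat.find hex, by omega, by omega⟩

lemma mem_iff_F (c : Finset (Fin (r - 1))) {v : ℕ} (h : v < r - 1) :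
    ((⟨v, h⟩ : Fin (r - 1)) ∈ c ↔ F c (v + 1) = F c v + 1) := by
  rw [F_succ_of_mem c h]
  split <;> simp_all

end S3

namespace S3
open Finset Function

variable {n r p : ℕ}

def A (n r p : ℕ) :=
  {c : Finset (Fin (r - 1)) // c.card = p - 1} × {T : Finset (Fin (n + 1)) // T.card = r + p}

def tE (a : A n r p) : Fin (r + p) ↪o Fin (n + 1) := a.2.1.orderEmbOfFin a.2.2

lemma tE_le (a : A n r p) (k : Fin (r + p)) : (k : ℕ) ≤ (tE a k : ℕ) := by
  have hsm : StrictMono (fun k : Fin (r + p) => ((tE a k : Fin (n + 1)) : ℕ)) := by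
    intro x y hxy
    exact (tE a).strictMono hxy
  have := sm_le hsm k.1 k.2
  simpa using this

lemma tE_lt_of_lt (a : A n r p) {k k' : Fin (r + p)} (h : (k : ℕ) < (k' : ℕ)) :
    ((tE a k : Fin (n + 1)) : ℕ) < ((tE a k' : Fin (n + 1)) : ℕ) :=
  (tE a).strictMono (by exact h)

def fC (hp : 1 ≤ p) (c : Finset (Fin (r - 1))) (hc : c.card = p - 1) (i : Fin r) : Fin p :=
  ⟨F c i.1, by have := F_le_card c i.1; omega⟩

lemma fC_mono (hp : 1 ≤ p) (c : Finset (Fin (r - 1))) (hc : c.card = p - 1) :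
    Monotone (fC hp c hc) := by
  intro i i' h
  exact F_mono c (by exact h)

lemma fC_surj (hp : 1 ≤ p) (hpr : p ≤ r) (c : Finset (Fin (r - 1))) (hc : c.card = p - 1) :
    Function.Surjective (fC hp c hc) := by
  intro j
  obtain ⟨i, hi, hF⟩ := F_surj c (by omega) (show (j : ℕ) ≤ c.card by have := j.2; omega)
  exact ⟨⟨i, hi⟩, Fin.ext hF⟩

def dval (hp : 1 ≤ p) (a : A n r p) (i : Fin r) : Fin n :=
  ⟨((tE a ⟨p + i.1, by omega⟩ : Fin (n + 1)) : ℕ) - 1, by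
    have h1 := tE_le a ⟨p + i.1, by omega⟩
    have h2 := (tE a ⟨p + i.1, by omega⟩).2
    simp only at h1 h2
    omega⟩

def yval (hp : 1 ≤ p) (hpr : p ≤ r) (a : A n r p) (j : Fin p) : Fin n :=
  ⟨((tE a ⟨p - 1 - j.1, by omega⟩ : Fin (n + 1)) : ℕ), by
    have h1 := tE_lt_of_lt a (show ((⟨p - 1 - j.1, by omega⟩ : Fin (r + p)) : ℕ)
      < ((⟨p, by omega⟩ : Fin (r + p)) : ℕ) by simp; omega)
    have h2 := (tE a ⟨p, by omega⟩).2
    omega⟩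

lemma dval_strictMono (hp : 1 ≤ p) (a : A n r p) : StrictMono (dval hp a) := by
  intro i i' h
  have h1 := tE_lt_of_lt a (show ((⟨p + i.1, by omega⟩ : Fin (r + p)) : ℕ)
    < ((⟨p + i'.1, by omega⟩ : Fin (r + p)) : ℕ) by simp; exact h)
  have h2 := tE_le a ⟨p + i.1, by omega⟩
  simp only at h1 h2
  simp only [dval, Fin.lt_def]
  omega

lemma yval_strictAnti (hp : 1 ≤ p) (hpr : p ≤ r) (a : A n r p) :
    StrictAnti (yval hp hpr a) := by
  intro j j' h
  have hj' := j'.2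
  have h1 := tE_lt_of_lt a (show ((⟨p - 1 - j'.1, by omega⟩ : Fin (r + p)) : ℕ)
    < ((⟨p - 1 - j.1, by omega⟩ : Fin (r + p)) : ℕ) by
      simp; have := Fin.lt_def.1 h; omega)
  simp only [yval, Fin.lt_def]
  exact h1

lemma yval_le_dval (hp : 1 ≤ p) (hpr : p ≤ r) (a : A n r p) (j : Fin p) (i : Fin r) :
    yval hp hpr a j ≤ dval hp a i := by
  have h1 := tE_lt_of_lt a (show ((⟨p - 1 - j.1, by omega⟩ : Fin (r + p)) : ℕ)
    < ((⟨p + i.1, by omega⟩ : Fin (r + p)) : ℕ) by simp; omega)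
  simp only [yval, dval, Fin.le_def]
  omega

noncomputable def decode (hp : 1 ≤ p) (hpr : p ≤ r) (a : A n r p) : PT n :=
  fun x => (Function.partialInv (dval hp a) x).map
    (fun i => yval hp hpr a (fC hp a.1.1 a.1.2 i))

lemma decode_eq_some (hp : 1 ≤ p) (hpr : p ≤ r) (a : A n r p) {x y : Fin n} :
    decode hp hpr a x = some y ↔
      ∃ i, dval hp a i = x ∧ yval hp hpr a (fC hp a.1.1 a.1.2 i) = y := by
  have hpi := Function.partialInv_of_injective (dval_strictMono hp a).injective
  unfold decode
  constructor
  · intro h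
    cases hinv : Function.partialInv (dval hp a) x with
    | none => rw [hinv] at h; simp at h
    | some i =>
      rw [hinv] at h
      simp only [Option.map_some] at h
      exact ⟨i, (hpi i x).1 hinv, Option.some.inj h⟩
  · rintro ⟨i, hix, hiy⟩
    rw [← hix, Function.partialInv_left (dval_strictMono hp a).injective]
    simp [hiy]

lemma decode_eq_none (hp : 1 ≤ p) (hpr : p ≤ r) (a : A n r p) {x : Fin n} :
    decode hp hpr a x = none ↔ ∀ i, dval hp a i ≠ x := by
  have hpi := Function.partialInv_of_injective (dval_strictMono hp a).injective
  unfold decode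
  cases hinv : Function.partialInv (dval hp a) x with
  | none =>
    simp only [Option.map_none, true_iff]
    intro i hix
    have := (hpi i x).2 hix
    rw [hinv] at this; exact nomatch this
  | some i =>
    simp only [Option.map_some]
    constructor
    · intro h; exact nomatch h
    · intro h; exact absurd ((hpi i x).1 hinv) (h i)

end S3

namespace S3
open Finset Function

variable {n r p : ℕ}

lemma decode_antitone (hp : 1 ≤ p) (hpr : p ≤ r) (a : A n r p) :
    IsAntitone (decode hp hpr a) := by
  intro x x' y y' hx hx' hxx'
  obtain ⟨i, hix, hiy⟩ := (decode_eq_some hp hpr a).1 hx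
  obtain ⟨i', hix', hiy'⟩ := (decode_eq_some hp hpr a).1 hx'
  have hii' : i ≤ i' := by
    by_contra hcon
    push_neg at hcon
    have := dval_strictMono hp a hcon
    rw [hix, hix'] at this
    exact absurd hxx' (not_le.2 this)
  have := (yval_strictAnti hp hpr a).antitone (fC_mono hp a.1.1 a.1.2 hii')
  rw [hiy, hiy'] at this
  exact this

lemma decode_decreasing (hp : 1 ≤ p) (hpr : p ≤ r) (a : A n r p) :
    IsDecreasing (decode hp hpr a) := by
  intro x y hx
  obtain ⟨i, hix, hiy⟩ := (decode_eq_some hp hpr a).1 hx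
  rw [← hix, ← hiy]
  exact yval_le_dval hp hpr a _ i

lemma decode_domSet (hp : 1 ≤ p) (hpr : p ≤ r) (a : A n r p) :
    domSet (decode hp hpr a) = Set.range (dval hp a) := by
  ext x
  simp only [domSet, Set.mem_setOf_eq, Set.mem_range]
  constructor
  · intro h
    cases hd : decode hp hpr a x with
    | none => exact absurd hd h
    | some y =>
      obtain ⟨i, hix, -⟩ := (decode_eq_some hp hpr a).1 hd
      exact ⟨i, hix⟩
  · intro ⟨i, hix⟩ hnone
    exact (decode_eq_none hp hpr a).1 hnone i hix

lemma decode_im (hp : 1 ≤ p) (hpr : p ≤ r) (a : A n r p) :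
    im (decode hp hpr a) = Set.range (yval hp hpr a) := by
  ext y
  simp only [im, Set.mem_setOf_eq, Set.mem_range]
  constructor
  · intro ⟨x, hx⟩
    obtain ⟨i, -, hiy⟩ := (decode_eq_some hp hpr a).1 hx
    exact ⟨_, hiy⟩
  · intro ⟨j, hj⟩
    obtain ⟨i, hi⟩ := fC_surj hp hpr a.1.1 a.1.2 j
    exact ⟨dval hp a i, (decode_eq_some hp hpr a).2 ⟨i, rfl, by rw [hi, hj]⟩⟩

lemma ncard_range_of_injective {α β : Type*} [Fintype α] (f : α → β)
    (hf : Function.Injective f) : (Set.range f).ncard = Fintype.card α := by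
  rw [← Set.image_univ, Set.ncard_image_of_injective _ hf, Set.ncard_univ,
    Nat.card_eq_fintype_card]

lemma decode_mem (hp : 1 ≤ p) (hpr : p ≤ r) (a : A n r p) :
    decode hp hpr a ∈ {ρ : PT n | IsAntitone ρ ∧ IsDecreasing ρ ∧
        (domSet ρ).ncard = r ∧ (im ρ).ncard = p} := by
  refine ⟨decode_antitone hp hpr a, decode_decreasing hp hpr a, ?_, ?_⟩
  · rw [decode_domSet hp hpr a,
      ncard_range_of_injective _ (dval_strictMono hp a).injective, Fintype.card_fin]
  · rw [decode_im hp hpr a,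
      ncard_range_of_injective _ (yval_strictAnti hp hpr a).injective, Fintype.card_fin]

end S3

namespace S3
open Finset Function

variable {n r p : ℕ}

lemma decode_injective (hp : 1 ≤ p) (hpr : p ≤ r) :
    Function.Injective (decode hp hpr (n := n)) := by
  intro a a' hdec
  -- Step 1: dval equal
  have hrange : Set.range (dval hp a) = Set.range (dval hp a') := by
    rw [← decode_domSet hp hpr a, ← decode_domSet hp hpr a', hdec]
  have hdval : dval hp a = dval hp a' := by
    have hwf : WellFoundedLT (Fin r) := inferInstance
    exact (@StrictMono.range_inj (Fin r) (Fin n) inferInstance inferInstance hwf _ _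
      (dval_strictMono hp a) (dval_strictMono hp a')).1 hrange
  -- Step 2: pointwise composed values equal
  have hvals : ∀ i, yval hp hpr a (fC hp a.1.1 a.1.2 i)
      = yval hp hpr a' (fC hp a'.1.1 a'.1.2 i) := by
    intro i
    have h1 : decode hp hpr a (dval hp a i) = some (yval hp hpr a (fC hp a.1.1 a.1.2 i)) :=
      (decode_eq_some hp hpr a).2 ⟨i, rfl, rfl⟩
    have h2 : decode hp hpr a' (dval hp a i)
        = some (yval hp hpr a' (fC hp a'.1.1 a'.1.2 i)) := by
      refine (decode_eq_some hp hpr a').2 ⟨i, ?_, rfl⟩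
      rw [← hdval]
    rw [hdec] at h1
    exact Option.some.inj (h1.symm.trans h2)
  -- Step 3: yval equal
  have hyrange : Set.range (yval hp hpr a) = Set.range (yval hp hpr a') := by
    have e1 : Set.range (yval hp hpr a)
        = Set.range (fun i : Fin r => yval hp hpr a (fC hp a.1.1 a.1.2 i)) := by
      ext y
      simp only [Set.mem_range]
      constructor
      · rintro ⟨j, rfl⟩
        obtain ⟨i, hi⟩ := fC_surj hp hpr a.1.1 a.1.2 j
        exact ⟨i, by rw [hi]⟩
      · rintro ⟨i, rfl⟩; exact ⟨_, rfl⟩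
    have e2 : Set.range (yval hp hpr a')
        = Set.range (fun i : Fin r => yval hp hpr a' (fC hp a'.1.1 a'.1.2 i)) := by
      ext y
      simp only [Set.mem_range]
      constructor
      · rintro ⟨j, rfl⟩
        obtain ⟨i, hi⟩ := fC_surj hp hpr a'.1.1 a'.1.2 j
        exact ⟨i, by rw [hi]⟩
      · rintro ⟨i, rfl⟩; exact ⟨_, rfl⟩
    rw [e1, e2]
    exact congrArg Set.range (funext hvals)

  have hyval : yval hp hpr a = yval hp hpr a' := by
    have hwf : WellFoundedGT (Fin p) := inferInstance
    exact (@StrictAnti.range_inj (Fin p) (Fin n) inferInstance inferInstance hwf _ _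
      (yval_strictAnti hp hpr a) (yval_strictAnti hp hpr a')).1 hyrange
  -- Step 4: fC equal
  have hfC : ∀ i, fC hp a.1.1 a.1.2 i = fC hp a'.1.1 a'.1.2 i := by
    intro i
    apply (yval_strictAnti hp hpr a).injective
    rw [hvals i, hyval]
  -- Step 5: c equal
  have hc : a.1.1 = a'.1.1 := by
    have hFF : ∀ v (h : v < r), F a.1.1 v = F a'.1.1 v := by
      intro v h
      have := hfC ⟨v, h⟩
      simpa [fC, Fin.ext_iff] using this
    ext e
    have he1 : (e : ℕ) + 1 < r := by have := e.2; omega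
    have he2 : (e : ℕ) < r := by omega
    rw [show e = (⟨e.1, e.2⟩ : Fin (r - 1)) from rfl, mem_iff_F a.1.1 e.2,
      mem_iff_F a'.1.1 e.2, hFF _ he1, hFF _ he2]
  -- Step 6: tE equal
  have htE : ∀ k : Fin (r + p), (tE a k : ℕ) = (tE a' k : ℕ) := by
    intro k
    rcases lt_or_ge (k : ℕ) p with hk | hk
    · have hj : p - 1 - (p - 1 - (k : ℕ)) = (k : ℕ) := by omega
      have h1 := congrArg Fin.val
        (congrFun hyval ⟨p - 1 - (k : ℕ), by omega⟩)
      simp only [yval] at h1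
      have hidx : (⟨p - 1 - ((⟨p - 1 - (k : ℕ), by omega⟩ : Fin p) : ℕ), by omega⟩
          : Fin (r + p)) = k := by
        apply Fin.ext; simp; omega
      rw [hidx] at h1
      exact h1
    · have hi : p + ((k : ℕ) - p) = (k : ℕ) := by omega
      have h1 := congrArg Fin.val
        (congrFun hdval ⟨(k : ℕ) - p, by have := k.2; omega⟩)
      simp only [dval] at h1
      have hidx : (⟨p + (((⟨(k : ℕ) - p, by have := k.2; omega⟩ : Fin r)) : ℕ), by
          have := k.2; omega⟩ : Fin (r + p)) = k := by
        apply Fin.ext; simp; omega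
      rw [hidx] at h1
      have hge1 : 1 ≤ (tE a k : ℕ) := by have := tE_le a k; omega
      have hge2 : 1 ≤ (tE a' k : ℕ) := by have := tE_le a' k; omega
      omega
  -- Step 7: T equal
  have hT : a.2.1 = a'.2.1 := by
    have h1 : Set.range (tE a) = (a.2.1 : Set (Fin (n + 1))) :=
      Finset.range_orderEmbOfFin _ _
    have h2 : Set.range (tE a') = (a'.2.1 : Set (Fin (n + 1))) :=
      Finset.range_orderEmbOfFin _ _
    have : (tE a : Fin (r + p) → Fin (n + 1)) = tE a' := by
      funext k; exact Fin.ext (htE k)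
    rw [← Finset.coe_inj, ← h1, ← h2, this]
  obtain ⟨⟨c, hcc⟩, ⟨T, hTT⟩⟩ := a
  obtain ⟨⟨c', hcc'⟩, ⟨T', hTT'⟩⟩ := a'
  simp only at hc hT
  subst hc hT
  rfl

end S3
namespace S3
open Finset Function

variable {n r p : ℕ}

set_option maxHeartbeats 1000000 in
lemma decode_surjective (hp : 1 ≤ p) (hpr : p ≤ r) (ρ : PT n)
    (hanti : IsAntitone ρ) (hdecr : IsDecreasing ρ) (hdc : (domSet ρ).ncard = r)
    (hic : (im ρ).ncard = p) : ∃ a : A n r p, decode hp hpr a = ρ := by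
  classical
  have hr0 : 0 < r := by omega
  -- domain finset
  have hDfin : (domSet ρ).Finite := Set.toFinite _
  obtain ⟨Dfin, hmemD, hD⟩ : ∃ Dfin : Finset (Fin n),
      (∀ x, x ∈ Dfin ↔ ρ x ≠ none) ∧ Dfin.card = r := by
    refine ⟨hDfin.toFinset, fun x => ?_, ?_⟩
    · rw [Set.Finite.mem_toFinset]; rfl
    · rw [← Set.ncard_eq_toFinset_card _ hDfin]; exact hdc
  obtain ⟨d, hdrange⟩ : ∃ d : Fin r ↪o Fin n, Set.range d = (Dfin : Set (Fin n)) :=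
    ⟨Dfin.orderEmbOfFin hD, Finset.range_orderEmbOfFin Dfin hD⟩
  have hdmemD : ∀ i, d i ∈ Dfin := by
    intro i
    have : d i ∈ Set.range d := ⟨i, rfl⟩
    rw [hdrange] at this
    exact this
  -- values on domain
  have hwex : ∀ i : Fin r, ∃ y, ρ (d i) = some y := by
    intro i
    have := (hmemD (d i)).1 (hdmemD i)
    cases hval : ρ (d i) with
    | none => exact absurd hval this
    | some y => exact ⟨y, rfl⟩
  choose w hw using hwex
  -- image finset
  have hYfin : (im ρ).Finite := Set.toFinite _
  obtain ⟨Yfin, hmemY, hY⟩ : ∃ Yfin : Finset (Fin n),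
      (∀ y, y ∈ Yfin ↔ ∃ x, ρ x = some y) ∧ Yfin.card = p := by
    refine ⟨hYfin.toFinset, fun y => ?_, ?_⟩
    · rw [Set.Finite.mem_toFinset]; rfl
    · rw [← Set.ncard_eq_toFinset_card _ hYfin]; exact hic
  obtain ⟨y0, hy0range⟩ : ∃ y0 : Fin p ↪o Fin n, Set.range y0 = (Yfin : Set (Fin n)) :=
    ⟨Yfin.orderEmbOfFin hY, Finset.range_orderEmbOfFin Yfin hY⟩
  have hy0mem : ∀ j, y0 j ∈ Yfin := by
    intro j
    have : y0 j ∈ Set.range y0 := ⟨j, rfl⟩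
    rw [hy0range] at this
    exact this
  have hwY : ∀ i : Fin r, ∃ j, y0 j = w i := by
    intro i
    have h1 : w i ∈ Yfin := (hmemY (w i)).2 ⟨d i, hw i⟩
    have : w i ∈ Set.range y0 := by rw [hy0range]; exact h1
    exact this
  choose j0 hj0 using hwY
  -- f and yv
  obtain ⟨f, hf_val⟩ : ∃ f : Fin r → Fin p, ∀ i, (f i : ℕ) = p - 1 - (j0 i : ℕ) :=
    ⟨fun i => ⟨p - 1 - (j0 i).1, by omega⟩, fun i => rfl⟩
  obtain ⟨yv, hyv_val⟩ : ∃ yv : Fin p → Fin n,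
      ∀ (j : Fin p) (j' : Fin p), (j' : ℕ) = p - 1 - (j : ℕ) → yv j = y0 j' := by
    refine ⟨fun j => y0 ⟨p - 1 - j.1, by omega⟩, fun j j' hj' => ?_⟩
    show y0 ⟨p - 1 - j.1, by omega⟩ = y0 j'
    exact congrArg y0 (Fin.ext hj'.symm)
  have hyvf : ∀ i, yv (f i) = w i := by
    intro i
    have h1 : yv (f i) = y0 (j0 i) := by
      apply hyv_val
      rw [hf_val]
      have := (j0 i).2
      omega
    rw [h1, hj0]
  have hfmono : Monotone f := by
    intro i i' hii'
    have h1 : d i ≤ d i' := d.monotone hii'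
    have h2 : w i' ≤ w i := hanti _ _ _ _ (hw i) (hw i') h1
    have h3 : j0 i' ≤ j0 i := y0.le_iff_le.1 (by rw [hj0, hj0]; exact h2)
    rw [Fin.le_def] at h3 ⊢
    rw [hf_val, hf_val]
    have := (j0 i).2
    omega
  have hfsurj : ∀ j : Fin p, ∃ i, (f i : ℕ) = (j : ℕ) := by
    intro j
    obtain ⟨x, hx⟩ := (hmemY _).1 (hy0mem ⟨p - 1 - j.1, by omega⟩)
    have hxD : x ∈ Dfin := (hmemD x).2 (by rw [hx]; simp)
    have hxr : x ∈ Set.range d := by rw [hdrange]; exact hxD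
    obtain ⟨i, rfl⟩ := hxr
    have hwi : w i = y0 ⟨p - 1 - j.1, by omega⟩ :=
      Option.some.inj ((hw i).symm.trans hx)
    have hj0i : j0 i = ⟨p - 1 - j.1, by omega⟩ := y0.injective (by rw [hj0 i, hwi])
    refine ⟨i, ?_⟩
    rw [hf_val, hj0i]
    simp only [Fin.val_mk]
    have := j.2
    omega
  have hfle : ∀ i i' : Fin r, (i : ℕ) ≤ (i' : ℕ) → (f i : ℕ) ≤ (f i' : ℕ) := by
    intro i i' h
    exact hfmono (show i ≤ i' from h)
  have hf0 : ∀ i : Fin r, (i : ℕ) = 0 → (f i : ℕ) = 0 := by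
    intro i hi
    obtain ⟨i', hi'⟩ := hfsurj ⟨0, by omega⟩
    have h1 := hfle i i' (by omega)
    simp only [Fin.val_mk] at hi'
    omega
  have hflast : ∀ i : Fin r, (i : ℕ) = r - 1 → (f i : ℕ) = p - 1 := by
    intro i hi
    obtain ⟨i', hi'⟩ := hfsurj ⟨p - 1, by omega⟩
    have h1 := hfle i' i (by have := i'.2; omega)
    simp only [Fin.val_mk] at hi'
    omega
  have hfstep : ∀ iv iv1 : Fin r, (iv1 : ℕ) = (iv : ℕ) + 1 →
      (f iv1 : ℕ) ≤ (f iv : ℕ) + 1 := by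
    intro iv iv1 hsucc
    by_contra hcon
    push_neg at hcon
    have hval_lt : (f iv : ℕ) + 1 < p := by
      have := (f iv1).2
      omega
    obtain ⟨i, hi⟩ := hfsurj ⟨(f iv : ℕ) + 1, hval_lt⟩
    simp only [Fin.val_mk] at hi
    rcases le_or_gt (i : ℕ) (iv : ℕ) with hle | hlt
    · have := hfle i iv hle
      omega
    · have := hfle iv1 i (by omega)
      omega
  -- the ascent set c
  obtain ⟨c, hmemc⟩ : ∃ c : Finset (Fin (r - 1)),
      ∀ (e : Fin (r - 1)) (iv iv1 : Fin r), (iv : ℕ) = (e : ℕ) → (iv1 : ℕ) = (e : ℕ) + 1 →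
        (e ∈ c ↔ (f iv : ℕ) < (f iv1 : ℕ)) := by
    refine ⟨Finset.univ.filter
      (fun e : Fin (r - 1) => ∃ iv iv1 : Fin r,
        (iv : ℕ) = (e : ℕ) ∧ (iv1 : ℕ) = (e : ℕ) + 1 ∧ (f iv : ℕ) < (f iv1 : ℕ)),
      fun e iv iv1 hiv hiv1 => ?_⟩
    rw [Finset.mem_filter]
    simp only [Finset.mem_univ, true_and]
    constructor
    · rintro ⟨iv', iv1', h1, h2, h3⟩
      have e1 : iv' = iv := Fin.ext (by omega)
      have e2 : iv1' = iv1 := Fin.ext (by omega)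
      rw [e1, e2] at h3
      exact h3
    · intro h3
      exact ⟨iv, iv1, hiv, hiv1, h3⟩
  have hkey : ∀ i : Fin r, F c (i : ℕ) = (f i : ℕ) := by
    have : ∀ (v : ℕ) (h : v < r), F c v = (f ⟨v, h⟩ : ℕ) := by
      intro v
      induction v with
      | zero =>
        intro h
        rw [F_zero]
        exact (hf0 ⟨0, h⟩ rfl).symm
      | succ v ih =>
        intro h
        have hv : v < r - 1 := by omega
        have hvr : v < r := by omega
        rw [F_succ_of_mem c hv, ih hvr]
        have hmono := hfle ⟨v, hvr⟩ ⟨v + 1, h⟩ (by simp)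
        have hstep := hfstep ⟨v, hvr⟩ ⟨v + 1, h⟩ (by simp)
        have hiff := hmemc ⟨v, hv⟩ ⟨v, hvr⟩ ⟨v + 1, h⟩ rfl rfl
        rcases lt_or_eq_of_le hmono with hlt | heq
        · rw [if_pos (hiff.2 hlt)]
          omega
        · rw [if_neg (by rw [hiff]; omega)]
          omega
    intro i
    have h1 := this i.1 i.2
    have h2 : (⟨i.1, i.2⟩ : Fin r) = i := Fin.ext rfl
    rw [h2] at h1
    exact h1
  have hc : c.card = p - 1 := by
    have h1 := hkey ⟨r - 1, by omega⟩
    simp only [Fin.val_mk] at h1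
    rw [F_top] at h1
    rw [h1]
    exact hflast ⟨r - 1, by omega⟩ rfl
  have hfC : ∀ i, fC hp c hc i = f i := by
    intro i
    apply Fin.ext
    exact hkey i
  -- max image ≤ min domain
  have hYD : ∀ (jm : Fin p) (i0 : Fin r), (jm : ℕ) = p - 1 → (i0 : ℕ) = 0 →
      y0 jm ≤ d i0 := by
    intro jm i0 hjm hi0
    obtain ⟨x, hx⟩ := (hmemY _).1 (hy0mem jm)
    have hxD : x ∈ Dfin := (hmemD x).2 (by rw [hx]; simp)
    have hxr : x ∈ Set.range d := by rw [hdrange]; exact hxD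
    obtain ⟨i, rfl⟩ := hxr
    have h1 : d i0 ≤ d i := d.monotone (by rw [Fin.le_def]; omega)
    have h2 : y0 jm ≤ w i0 := hanti _ _ _ _ (hw i0) hx h1
    exact h2.trans (hdecr _ _ (hw i0))
  -- the t function
  obtain ⟨tf, htf_lt, htf_ge⟩ : ∃ tf : Fin (r + p) → Fin (n + 1),
      (∀ (k : Fin (r + p)) (j : Fin p), (k : ℕ) = (j : ℕ) → tf k = (y0 j).castSucc) ∧
      (∀ (k : Fin (r + p)) (i : Fin r), (k : ℕ) = p + (i : ℕ) → tf k = (d i).succ) := by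
    refine ⟨fun k =>
      if h : k.1 < p then (y0 ⟨k.1, h⟩).castSucc
      else (d ⟨k.1 - p, by have := k.2; omega⟩).succ, fun k j hkj => ?_, fun k i hki => ?_⟩
    · dsimp only
      rw [dif_pos (by omega : k.1 < p)]
      exact congrArg _ (congrArg y0 (Fin.ext hkj))
    · dsimp only
      rw [dif_neg (by omega : ¬ k.1 < p)]
      refine congrArg _ (congrArg d (Fin.ext ?_))
      simp only [Fin.val_mk]
      omega
  have htfmono : StrictMono tf := by
    intro k k' hkk'
    rw [Fin.lt_def] at hkk'
    rw [Fin.lt_def]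
    rcases lt_or_ge (k' : ℕ) p with h2 | h2
    · have h1 : (k : ℕ) < p := by omega
      rw [htf_lt k ⟨k.1, h1⟩ rfl, htf_lt k' ⟨k'.1, h2⟩ rfl]
      simp only [Fin.coe_castSucc]
      exact y0.strictMono (show (⟨k.1, h1⟩ : Fin p) < ⟨k'.1, h2⟩ from hkk')
    · rcases lt_or_ge (k : ℕ) p with h1 | h1
      · rw [htf_lt k ⟨k.1, h1⟩ rfl, htf_ge k' ⟨k'.1 - p, by have := k'.2; omega⟩ (by
          simp only [Fin.val_mk]; omega)]
        simp only [Fin.coe_castSucc, Fin.val_succ]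
        have ha : y0 ⟨k.1, h1⟩ ≤ y0 ⟨p - 1, by omega⟩ :=
          y0.monotone (by rw [Fin.le_def]; simp only [Fin.val_mk]; omega)
        have hb : d ⟨0, hr0⟩ ≤ d ⟨k'.1 - p, by have := k'.2; omega⟩ :=
          d.monotone (by rw [Fin.le_def]; exact Nat.zero_le _)
        have hc' := (ha.trans (hYD ⟨p - 1, by omega⟩ ⟨0, hr0⟩ rfl rfl)).trans hb
        rw [Fin.le_def] at hc'
        omega
      · rw [htf_ge k ⟨k.1 - p, by have := k.2; omega⟩ (by simp only [Fin.val_mk]; omega),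
          htf_ge k' ⟨k'.1 - p, by have := k'.2; omega⟩ (by simp only [Fin.val_mk]; omega)]
        simp only [Fin.val_succ]
        have := d.strictMono (show (⟨k.1 - p, by have := k.2; omega⟩ : Fin r)
          < ⟨k'.1 - p, by have := k'.2; omega⟩ by rw [Fin.lt_def]; simp only [Fin.val_mk]; omega)
        rw [Fin.lt_def] at this
        omega
  obtain ⟨T, hTmem, hT⟩ : ∃ T : Finset (Fin (n + 1)),
      (∀ k, tf k ∈ T) ∧ T.card = r + p := by
    refine ⟨Finset.univ.image tf, fun k => Finset.mem_image.2 ⟨k, Finset.mem_univ k, rfl⟩, ?_⟩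
    rw [Finset.card_image_of_injective _ htfmono.injective, Finset.card_univ, Fintype.card_fin]
  refine ⟨(⟨c, hc⟩, ⟨T, hT⟩), ?_⟩
  set a : A n r p := (⟨c, hc⟩, ⟨T, hT⟩) with ha_def
  have htE : ∀ k, tE a k = tf k := by
    have h1 : tf = T.orderEmbOfFin hT := Finset.orderEmbOfFin_unique hT hTmem htfmono
    intro k
    show (T.orderEmbOfFin hT) k = tf k
    exact (congrFun h1 k).symm
  have hdv : ∀ i, dval hp a i = d i := by
    intro i
    apply Fin.ext
    show ((tE a ⟨p + i.1, by omega⟩ : Fin (n + 1)) : ℕ) - 1 = (d i : ℕ)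
    rw [htE ⟨p + i.1, by omega⟩, htf_ge _ i rfl]
    simp only [Fin.val_succ]
    omega
  have hyvv : ∀ (j : Fin p) (j' : Fin p), (j' : ℕ) = p - 1 - (j : ℕ) →
      yval hp hpr a j = yv j := by
    intro j j' hj'
    apply Fin.ext
    show ((tE a ⟨p - 1 - j.1, by omega⟩ : Fin (n + 1)) : ℕ) = (yv j : ℕ)
    rw [htE ⟨p - 1 - j.1, by omega⟩, htf_lt _ j' (by simp only [Fin.val_mk]; omega), hyv_val j j' hj']
    simp only [Fin.coe_castSucc]
  funext x
  by_cases hx : x ∈ Dfin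
  · have hxr : x ∈ Set.range d := by rw [hdrange]; exact hx
    obtain ⟨i, rfl⟩ := hxr
    have h1 : decode hp hpr a (d i) = some (yval hp hpr a (fC hp c hc i)) := by
      apply (decode_eq_some hp hpr a).2
      exact ⟨i, by rw [hdv], rfl⟩
    rw [h1, hw i, hfC,
      hyvv (f i) ⟨p - 1 - (f i : ℕ), by omega⟩ (by simp only [Fin.val_mk]), hyvf]
  · have h1 : decode hp hpr a x = none := by
      apply (decode_eq_none hp hpr a).2
      intro i hix
      rw [hdv] at hix
      exact hx (hix ▸ hdmemD i)
    have h2 : ρ x = none := by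
      by_contra hcon
      exact hx ((hmemD x).2 hcon)
    rw [h1, h2]

end S3

/-- The number of antitone order-decreasing partial transformations of `[n]` with
domain of size `r` and image of size `p` equals `C(r−1,p−1)·C(n+1,r+p)`. -/
theorem stmt3 (n r p : ℕ) (hp : 1 ≤ p) (hpr : p ≤ r) :
    Set.ncard {ρ : PT n | IsAntitone ρ ∧ IsDecreasing ρ ∧
        (domSet ρ).ncard = r ∧ (im ρ).ncard = p} =
      Nat.choose (r - 1) (p - 1) * Nat.choose (n + 1) (r + p) := by
  classical
  have hbij : Function.Bijective (fun a : S3.A n r p =>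
      (⟨S3.decode hp hpr a, S3.decode_mem hp hpr a⟩ :
        {ρ : PT n | IsAntitone ρ ∧ IsDecreasing ρ ∧
          (domSet ρ).ncard = r ∧ (im ρ).ncard = p})) := by
    constructor
    · intro a a' h
      exact S3.decode_injective hp hpr (congrArg Subtype.val h)
    · rintro ⟨ρ, hρ1, hρ2, hρ3, hρ4⟩
      obtain ⟨a, ha⟩ := S3.decode_surjective hp hpr ρ hρ1 hρ2 hρ3 hρ4
      exact ⟨a, Subtype.ext ha⟩
  rw [← Nat.card_coe_set_eq, ← Nat.card_congr (Equiv.ofBijective _ hbij)]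
  rw [show S3.A n r p = ({c : Finset (Fin (r - 1)) // c.card = p - 1} ×
    {T : Finset (Fin (n + 1)) // T.card = r + p}) from rfl]
  rw [Nat.card_prod, Nat.card_eq_fintype_card, Nat.card_eq_fintype_card,
    Fintype.card_finset_len, Fintype.card_finset_len, Fintype.card_fin, Fintype.card_fin]
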